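/- (Theorem 1 of the paper.) Let K be a real symmetric positive semidefinite n×n matrix, γ ≥ 0, and K' = K − γG, where G = G(a,b,c) is the canonical gradient matrix of a triplet of distinct indices. Define K'' = K' if K' is positive semidefinite; otherwise let λ↓ < 0 be the smallest eigenvalue of K' with unit eigenvector v↓ and set K'' = K' − λ↓ v↓ v↓ᵀ. Then K'' is positive semidefinite, and for every positive semidefinite n×n matrix P, ‖K' − K''‖_F ≤ ‖K' − P‖_F; i.e., K'' is the positive semidefinite matrix closest to K' in Frobenius distance. -/

import Mathlib

open Matrix

/-- The canonical gradient matrix `G(a,b,c)` of a triplet of indices. -/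
def canonG {n : ℕ} (a b c : Fin n) : Matrix (Fin n) (Fin n) ℝ :=
  fun i j =>
    if (i = a ∧ j = b) ∨ (i = b ∧ j = a) then -2
    else if (i = a ∧ j = c) ∨ (i = c ∧ j = a) then 2
    else if i = b ∧ j = b then 1
    else if i = c ∧ j = c then -1
    else 0

/-- The Frobenius norm of a real matrix. -/
noncomputable def frobNorm {n : ℕ} (A : Matrix (Fin n) (Fin n) ℝ) : ℝ :=
  Real.sqrt (∑ i, ∑ j, (A i j) ^ 2)

lemma vecMulVec_mulVec' {n : ℕ} (u w x : Fin n → ℝ) :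
    (Matrix.vecMulVec u w).mulVec x = (w ⬝ᵥ x) • u := by
  ext i
  simp only [Matrix.mulVec, Matrix.vecMulVec_apply, dotProduct, Pi.smul_apply,
    smul_eq_mul, Finset.sum_mul]
  exact Finset.sum_congr rfl fun j _ => by ring

lemma dot_symm' {n : ℕ} (A : Matrix (Fin n) (Fin n) ℝ) (hA : A.IsHermitian)
    (x y : Fin n → ℝ) : x ⬝ᵥ A.mulVec y = y ⬝ᵥ A.mulVec x := by
  have h : ∀ i j, A i j = A j i := by
    intro i j
    have := congrFun (congrFun hA j) i
    simpa [Matrix.conjTranspose_apply] using this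
  simp only [dotProduct, Matrix.mulVec, dotProduct, Finset.mul_sum]
  rw [Finset.sum_comm]
  exact Finset.sum_congr rfl fun j _ => Finset.sum_congr rfl fun i _ => by rw [h i j]; ring

/-- decomposition of the canonical gradient matrix as a difference of rank one matrices -/
lemma canonG_decomp {n : ℕ} (a b c : Fin n) (hab : a ≠ b) (hac : a ≠ c) (hbc : b ≠ c) :
    canonG a b c = (1/3 : ℝ) • Matrix.vecMulVec
        (fun i => if i = a then (2:ℝ) else if i = b then -2 else if i = c then 1 else 0)
        (fun i => if i = a then (2:ℝ) else if i = b then -2 else if i = c then 1 else 0)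
      - (1/3 : ℝ) • Matrix.vecMulVec
        (fun i => if i = a then (2:ℝ) else if i = b then 1 else if i = c then -2 else 0)
        (fun i => if i = a then (2:ℝ) else if i = b then 1 else if i = c then -2 else 0) := by
  ext i j
  simp only [canonG, Matrix.sub_apply, Matrix.smul_apply, Matrix.vecMulVec_apply, smul_eq_mul]
  by_cases hia : i = a <;> by_cases hib : i = b <;> by_cases hic : i = c <;>
    by_cases hja : j = a <;> by_cases hjb : j = b <;> by_cases hjc : j = c <;>
    simp_all <;> norm_num

/-- Theorem 1 of the paper: the efficient projection step applied to
`K' = K - γ • G(a,b,c)` (with `K` PSD and `γ ≥ 0`) produces the PSD matrix closest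
to `K'` in Frobenius distance.  Here `K'' = K'` if `K'` is already PSD, and
otherwise `K'' = K' - λ↓ • v↓ v↓ᵀ` where `λ↓ < 0` is the smallest eigenvalue of
`K'` with unit eigenvector `v↓`. -/
theorem efficient_projection_is_nearest_psd {n : ℕ} (hn : 3 ≤ n) (a b c : Fin n)
    (hab : a ≠ b) (hac : a ≠ c) (hbc : b ≠ c)
    (K : Matrix (Fin n) (Fin n) ℝ) (hK : K.PosSemidef) (γ : ℝ) (hγ : 0 ≤ γ)
    (K' : Matrix (Fin n) (Fin n) ℝ) (hK' : K' = K - γ • canonG a b c)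
    (hsym : K'.IsHermitian)
    (K'' : Matrix (Fin n) (Fin n) ℝ)
    (hcase1 : K'.PosSemidef → K'' = K')
    (hcase2 : ¬ K'.PosSemidef →
      ∃ (lam : ℝ) (v : Fin n → ℝ), lam < 0 ∧ (∀ i : Fin n, lam ≤ hsym.eigenvalues i) ∧
        K'.mulVec v = lam • v ∧ (∑ i, v i ^ 2 = 1) ∧
        K'' = K' - lam • Matrix.vecMulVec v v) :
    K''.PosSemidef ∧
      ∀ P : Matrix (Fin n) (Fin n) ℝ, P.PosSemidef →
        frobNorm (K' - K'') ≤ frobNorm (K' - P) := by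
  by_cases hpsd : K'.PosSemidef
  · rw [hcase1 hpsd]
    refine ⟨hpsd, fun P hP => ?_⟩
    have h0 : frobNorm (K' - K') = 0 := by
      simp [frobNorm]
    rw [h0]
    exact Real.sqrt_nonneg _
  · obtain ⟨lam, v, hlam, hmin, hKv, hv, hK''⟩ := hcase2 hpsd
    set u : Fin n → ℝ :=
      fun i => if i = a then (2:ℝ) else if i = b then -2 else if i = c then 1 else 0 with hu
    set s : Fin n → ℝ :=
      fun i => if i = a then (2:ℝ) else if i = b then 1 else if i = c then -2 else 0 with hs
    have hv1 : v ⬝ᵥ v = 1 := by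
      rw [← hv]; exact Finset.sum_congr rfl fun i _ => (sq (v i)).symm
    -- quadratic form of K'
    have hq : ∀ x : Fin n → ℝ, x ⬝ᵥ K'.mulVec x
        = (x ⬝ᵥ K.mulVec x + (γ/3) * (s ⬝ᵥ x)^2) - (γ/3) * (u ⬝ᵥ x)^2 := by
      intro x
      rw [hK', canonG_decomp a b c hab hac hbc]
      rw [smul_sub, smul_smul, smul_smul, ← hu, ← hs]
      rw [Matrix.sub_mulVec, Matrix.sub_mulVec, dotProduct_sub, dotProduct_sub,
        Matrix.smul_mulVec, Matrix.smul_mulVec,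
        vecMulVec_mulVec', vecMulVec_mulVec']
      have h1 : ∀ w : Fin n → ℝ, x ⬝ᵥ ((γ * (1/3)) • ((w ⬝ᵥ x) • w)) = (γ/3) * (w ⬝ᵥ x)^2 := by
        intro w
        rw [dotProduct_smul, dotProduct_smul, dotProduct_comm x w]
        simp [smul_eq_mul]; ring
      rw [h1 u, h1 s]; ring
    have hperp : ∀ x : Fin n → ℝ, u ⬝ᵥ x = 0 → 0 ≤ x ⬝ᵥ K'.mulVec x := by
      intro x hx
      rw [hq x, hx]
      have hKx : 0 ≤ x ⬝ᵥ K.mulVec x := by simpa using (Matrix.posSemidef_iff_dotProduct_mulVec.mp hK).2 x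
      have : 0 ≤ (γ/3) * (s ⬝ᵥ x)^2 := by positivity
      nlinarith
    have hsymm' : ∀ x y : Fin n → ℝ, x ⬝ᵥ K'.mulVec y = y ⬝ᵥ K'.mulVec x :=
      dot_symm' K' hsym
    -- the key claim: the quadratic form of K' is nonnegative orthogonally to v
    have claim : ∀ w : Fin n → ℝ, v ⬝ᵥ w = 0 → 0 ≤ w ⬝ᵥ K'.mulVec w := by
      intro w hw
      have hwv : w ⬝ᵥ v = 0 := by rw [dotProduct_comm]; exact hw
      have hvKw : v ⬝ᵥ K'.mulVec w = 0 := by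
        rw [hsymm', hKv, dotProduct_smul, smul_eq_mul, hwv, mul_zero]
      have hwKv : w ⬝ᵥ K'.mulVec v = 0 := by rw [hsymm']; exact hvKw
      by_cases huw : u ⬝ᵥ w = 0
      · exact hperp w huw
      · set z : Fin n → ℝ := (u ⬝ᵥ w) • v - (u ⬝ᵥ v) • w with hz
        have huz : u ⬝ᵥ z = 0 := by
          rw [hz, dotProduct_sub, dotProduct_smul, dotProduct_smul]
          simp [smul_eq_mul]; ring
        have h0 : 0 ≤ z ⬝ᵥ K'.mulVec z := hperp z huz
        have hexp : z ⬝ᵥ K'.mulVec z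
            = (u ⬝ᵥ w)^2 * lam + (u ⬝ᵥ v)^2 * (w ⬝ᵥ K'.mulVec w) := by
          have h2 : K'.mulVec z = (u ⬝ᵥ w) • (lam • v) - (u ⬝ᵥ v) • (K'.mulVec w) := by
            rw [hz, Matrix.mulVec_sub, Matrix.mulVec_smul, Matrix.mulVec_smul, hKv]
          rw [hz, h2, dotProduct_sub, sub_dotProduct, sub_dotProduct]
          simp only [smul_dotProduct, dotProduct_smul, smul_eq_mul]
          rw [hv1, hvKw, hwv]
          ring
        have hupos : 0 < (u ⬝ᵥ w)^2 := by positivity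
        nlinarith [sq_nonneg (u ⬝ᵥ v)]
    constructor
    · -- K'' is positive semidefinite
      refine Matrix.posSemidef_iff_dotProduct_mulVec.mpr ⟨?_, ?_⟩
      · -- hermitian
        rw [hK'']
        refine hsym.sub ?_
        have hvv : (lam • Matrix.vecMulVec v v).IsHermitian := by
          apply Matrix.ext
          intro i j
          simp only [Matrix.conjTranspose_apply, Matrix.smul_apply, Matrix.vecMulVec_apply,
            star_trivial, smul_eq_mul]
          ring
        exact hvv
      · intro x
        have hstar : star x = x := by simp
        rw [hstar]
        set α : ℝ := v ⬝ᵥ x with hα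
        set w : Fin n → ℝ := x - α • v with hwdef
        have hvw : v ⬝ᵥ w = 0 := by
          rw [hwdef, dotProduct_sub, dotProduct_smul, smul_eq_mul, hv1]
          simp [hα]
        have hxw : x = w + α • v := by rw [hwdef]; abel
        have hmv : K''.mulVec x = K'.mulVec w := by
          rw [hK'', Matrix.sub_mulVec, Matrix.smul_mulVec, vecMulVec_mulVec']
          rw [hxw, Matrix.mulVec_add, Matrix.mulVec_smul, hKv]
          rw [dotProduct_add, dotProduct_smul, hvw, hv1]
          simp [smul_smul]
          module
        rw [hmv, hxw, add_dotProduct, smul_dotProduct]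
        have hvKw : v ⬝ᵥ K'.mulVec w = 0 := by
          rw [hsymm', hKv, dotProduct_smul, smul_eq_mul, dotProduct_comm, hvw,
            mul_zero]
        rw [hvKw]
        simpa using claim w hvw
    · -- nearest
      intro P hP
      have hdiff : K' - K'' = lam • Matrix.vecMulVec v v := by
        rw [hK'']; exact sub_sub_cancel _ _
      have hls : ∑ i, ∑ j, ((K' - K'') i j)^2 = lam^2 := by
        rw [hdiff]
        have h1 : ∀ i j : Fin n, ((lam • Matrix.vecMulVec v v) i j)^2
            = lam^2 * (v i ^2 * v j ^2) := by
          intro i j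
          simp only [Matrix.smul_apply, Matrix.vecMulVec_apply, smul_eq_mul]
          ring
        simp_rw [h1, ← Finset.mul_sum, ← Finset.sum_mul]
        rw [hv]; ring
      set A : Matrix (Fin n) (Fin n) ℝ := K' - P with hA
      set t : ℝ := v ⬝ᵥ A.mulVec v with ht
      have hPv : 0 ≤ v ⬝ᵥ P.mulVec v := by simpa using (Matrix.posSemidef_iff_dotProduct_mulVec.mp hP).2 v
      have htval : t = lam - v ⬝ᵥ P.mulVec v := by
        rw [ht, hA, Matrix.sub_mulVec, dotProduct_sub, hKv, dotProduct_smul,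
          smul_eq_mul, hv1, mul_one]
      have htle : t ≤ lam := by rw [htval]; linarith
      have hCS : t^2 ≤ ∑ i, ∑ j, (A i j)^2 := by
        have hdouble : t = ∑ p : Fin n × Fin n, (v p.1 * v p.2) * A p.1 p.2 := by
          rw [ht, Fintype.sum_prod_type]
          simp only [dotProduct, Matrix.mulVec, dotProduct, Finset.mul_sum]
          exact Finset.sum_congr rfl fun i _ => Finset.sum_congr rfl fun j _ => by ring
        have h := Finset.sum_mul_sq_le_sq_mul_sq Finset.univ
          (fun p : Fin n × Fin n => v p.1 * v p.2) (fun p : Fin n × Fin n => A p.1 p.2)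
        have hv2 : ∑ p : Fin n × Fin n, (v p.1 * v p.2)^2 = 1 := by
          rw [Fintype.sum_prod_type]
          simp_rw [mul_pow, ← Finset.mul_sum, ← Finset.sum_mul]
          rw [hv]
          norm_num
        rw [hdouble]
        calc (∑ p : Fin n × Fin n, (v p.1 * v p.2) * A p.1 p.2)^2
            ≤ (∑ p : Fin n × Fin n, (v p.1 * v p.2)^2) * ∑ p : Fin n × Fin n, (A p.1 p.2)^2 := h
          _ = ∑ i, ∑ j, (A i j)^2 := by rw [hv2, one_mul, Fintype.sum_prod_type]
      have hfinal : lam^2 ≤ ∑ i, ∑ j, (A i j)^2 := by nlinarith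
      rw [frobNorm, frobNorm, hls]
      exact Real.sqrt_le_sqrt hfinal
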